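/- arXiv:2007.03998 — 5 statements merged into one kernel-verified Lean document; each statement's English description precedes it below -/
import Mathlib

section
/- For every real number α with 1/2 ≤ α ≤ 3/4, the function f(x) = (2 + x^α)/(1 + x) is nonincreasing on the interval [3, ∞): for all real numbers x, y with 3 ≤ x ≤ y, one has (2 + y^α)/(1 + y) ≤ (2 + x^α)/(1 + x). -/
/-- For `1/2 ≤ α ≤ 3/4`, the function `x ↦ (2 + x^α)/(1 + x)` is nonincreasing on `[3, ∞)`. -/
theorem antitone_on_ratio (α : ℝ) (hα₁ : 1 / 2 ≤ α) (hα₂ : α ≤ 3 / 4)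
    (x y : ℝ) (hx : 3 ≤ x) (hxy : x ≤ y) :
    (2 + y ^ α) / (1 + y) ≤ (2 + x ^ α) / (1 + x) := by
  have hderiv : ∀ t : ℝ, 3 < t →
      HasDerivAt (fun s : ℝ => (2 + s ^ α) / (1 + s))
        (((α * t ^ (α - 1)) * (1 + t) - (2 + t ^ α) * 1) / (1 + t) ^ 2) t := by
    intro t ht
    have ht0 : (0:ℝ) < t := by linarith
    have h1 : HasDerivAt (fun s : ℝ => 2 + s ^ α) (α * t ^ (α - 1)) t := by
      simpa using (Real.hasDerivAt_rpow_const (p := α) (Or.inl ht0.ne')).const_add 2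
    have h2 : HasDerivAt (fun s : ℝ => 1 + s) 1 t := by
      simpa using (hasDerivAt_id t).const_add 1
    exact h1.div h2 (by linarith)
  have key : AntitoneOn (fun s : ℝ => (2 + s ^ α) / (1 + s)) (Set.Ici 3) := by
    apply antitoneOn_of_deriv_nonpos (convex_Ici 3)
    · apply ContinuousOn.div
      · exact continuousOn_const.add (continuousOn_id.rpow_const (fun t ht =>
          Or.inl (by have h3t : (3:ℝ) ≤ t := ht; positivity)))
      · fun_prop
      · intro t ht; have : (3:ℝ) ≤ t := ht; positivity
    · intro t ht
      rw [interior_Ici] at ht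
      exact (hderiv t ht).differentiableAt.differentiableWithinAt
    · intro t ht
      rw [interior_Ici] at ht
      have ht' : (3:ℝ) < t := ht
      rw [(hderiv t ht').deriv]
      have ht0 : (0:ℝ) < t := by linarith
      have h1t : (1:ℝ) ≤ t := by linarith
      apply div_nonpos_of_nonpos_of_nonneg _ (by positivity)
      have hpow : t ^ (α - 1) * t = t ^ α := by
        rw [← Real.rpow_add_one ht0.ne']; ring_nf
      have h1 : t ^ (α - 1) ≤ 1 :=
        Real.rpow_le_one_of_one_le_of_nonpos h1t (by linarith)
      have h2 : (0:ℝ) ≤ t ^ α := Real.rpow_nonneg ht0.le α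
      have h3 : (0:ℝ) ≤ t ^ (α - 1) := Real.rpow_nonneg ht0.le _
      nlinarith [mul_le_mul_of_nonneg_left h1 (by linarith : (0:ℝ) ≤ α)]
  exact key (Set.mem_Ici.2 hx) (Set.mem_Ici.2 (hx.trans hxy)) hxy
end

section
/- Let N be an odd squarefree integer with ω(N) ≥ 8. Then (10/(3π)) · ( ∏_{p prime, p ∣ N} (2 + p^{3/4})/(1 + p) + 3 · ∏_{p prime, p ∣ N} (2 + p^{1/2})/(1 + p) ) < 1/12. -/
open Finset

private lemma real_rpow_add_le {a b p : ℝ} (ha : 0 ≤ a) (hb : 0 ≤ b) (hp : 0 ≤ p)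
    (hp1 : p ≤ 1) : (a + b) ^ p ≤ a ^ p + b ^ p := by
  lift a to NNReal using ha
  lift b to NNReal using hb
  have := NNReal.rpow_add_le_add_rpow a b hp hp1
  exact_mod_cast this

/-- Antitonicity of `x ↦ (2 + x^β)/(1+x)` on naturals `≥ 3`, for `0 ≤ β ≤ 1`. -/
private lemma f_anti {β : ℝ} (hβ0 : 0 ≤ β) (hβ1 : β ≤ 1) {n m : ℕ} (h3 : 3 ≤ n)
    (hnm : n ≤ m) :
    (2 + (m : ℝ) ^ β) / (1 + (m : ℝ)) ≤ (2 + (n : ℝ) ^ β) / (1 + (n : ℝ)) := by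
  rcases eq_or_lt_of_le hnm with rfl | hlt
  · exact le_refl _
  have hx : (3 : ℝ) ≤ (n : ℝ) := by exact_mod_cast h3
  have hy : (n : ℝ) ≤ (m : ℝ) := by exact_mod_cast hnm
  have hx0 : (0 : ℝ) ≤ (n : ℝ) := by linarith
  have hy0 : (0 : ℝ) ≤ (m : ℝ) := by linarith
  have hd1 : (1 : ℝ) ≤ (m : ℝ) - (n : ℝ) := by
    have : (n : ℝ) + 1 ≤ (m : ℝ) := by exact_mod_cast hlt
    linarith
  have hd0 : (0 : ℝ) ≤ (m : ℝ) - (n : ℝ) := by linarith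
  have h1 : (m : ℝ) ^ β ≤ (n : ℝ) ^ β + ((m : ℝ) - (n : ℝ)) ^ β := by
    have := real_rpow_add_le hx0 hd0 hβ0 hβ1
    rwa [add_sub_cancel] at this
  have h2 : ((m : ℝ) - (n : ℝ)) ^ β ≤ (m : ℝ) - (n : ℝ) := by
    have := Real.rpow_le_rpow_of_exponent_le hd1 hβ1
    rwa [Real.rpow_one] at this
  have h3' : (m : ℝ) ^ β * (n : ℝ) ≤ (n : ℝ) ^ β * (m : ℝ) := by
    have hn : (n : ℝ) = (n : ℝ) ^ β * (n : ℝ) ^ (1 - β) := by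
      rw [← Real.rpow_add (by linarith : (0:ℝ) < (n:ℝ))]
      norm_num
    have hm : (m : ℝ) = (m : ℝ) ^ β * (m : ℝ) ^ (1 - β) := by
      rw [← Real.rpow_add (by linarith : (0:ℝ) < (m:ℝ))]
      norm_num
    have hmono : (n : ℝ) ^ (1 - β) ≤ (m : ℝ) ^ (1 - β) :=
      Real.rpow_le_rpow hx0 hy (by linarith)
    have h1' : (0:ℝ) ≤ (m:ℝ) ^ β := Real.rpow_nonneg hy0 β
    have h2' : (0:ℝ) ≤ (n:ℝ) ^ β := Real.rpow_nonneg hx0 β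
    calc (m : ℝ) ^ β * (n : ℝ) = (m : ℝ) ^ β * ((n : ℝ) ^ β * (n : ℝ) ^ (1 - β)) := by
          rw [← hn]
      _ ≤ (m : ℝ) ^ β * ((n : ℝ) ^ β * (m : ℝ) ^ (1 - β)) :=
          mul_le_mul_of_nonneg_left (mul_le_mul_of_nonneg_left hmono h2') h1'
      _ = (n : ℝ) ^ β * ((m : ℝ) ^ β * (m : ℝ) ^ (1 - β)) := by ring
      _ = (n : ℝ) ^ β * (m : ℝ) := by rw [← hm]
  rw [div_le_div_iff₀ (by linarith) (by linarith)]
  have hnb : (0:ℝ) ≤ (n:ℝ) ^ β := Real.rpow_nonneg hx0 β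
  nlinarith [h1, h2, h3']

/-- Any odd prime `≥ k` avoiding a (decidably checkable) gap is `≥ K`. -/
private lemma gap_step (k K : ℕ) {n : ℕ} (hp : n.Prime) (ho : n % 2 = 1)
    (H : ∀ j < K, k ≤ j → ¬(Nat.Prime j ∧ j % 2 = 1)) (hk : k ≤ n) : K ≤ n := by
  by_contra h
  push_neg at h
  exact H n h hk ⟨hp, ho⟩

private lemma prod_le_top (f : ℕ → ℝ) (hpos : ∀ n, 0 < f n)
    (hanti : ∀ n m : ℕ, 3 ≤ n → n ≤ m → f m ≤ f n) (hle1 : f 5 ≤ 1) :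
    ∀ (k : ℕ) (S : Finset ℕ), (∀ p ∈ S, p.Prime ∧ p % 2 = 1) → S.card = 8 + k →
      ∏ p ∈ S, f p ≤ f 3 * f 5 * f 7 * f 11 * f 13 * f 17 * f 19 * f 23 := by
  intro k
  induction k with
  | zero =>
    intro S hS hcard
    have hcard8 : S.card = 8 := hcard
    set e := S.orderEmbOfFin hcard8 with he
    have hmem : ∀ i, e i ∈ S := fun i => S.orderEmbOfFin_mem hcard8 i
    have hP : ∀ i, (e i).Prime := fun i => (hS _ (hmem i)).1
    have hO : ∀ i, (e i) % 2 = 1 := fun i => (hS _ (hmem i)).2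
    have hmono : StrictMono e := (S.orderEmbOfFin hcard8).strictMono
    have h0 : 3 ≤ e 0 := gap_step 0 3 (hP 0) (hO 0) (by decide) (Nat.zero_le _)
    have h1 : 5 ≤ e 1 := gap_step 4 5 (hP 1) (hO 1) (by decide)
      (by have := hmono (show (0:Fin 8) < 1 by decide); omega)
    have h2 : 7 ≤ e 2 := gap_step 6 7 (hP 2) (hO 2) (by decide)
      (by have := hmono (show (1:Fin 8) < 2 by decide); omega)
    have h3 : 11 ≤ e 3 := gap_step 8 11 (hP 3) (hO 3) (by decide)
      (by have := hmono (show (2:Fin 8) < 3 by decide); omega)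
    have h4 : 13 ≤ e 4 := gap_step 12 13 (hP 4) (hO 4) (by decide)
      (by have := hmono (show (3:Fin 8) < 4 by decide); omega)
    have h5 : 17 ≤ e 5 := gap_step 14 17 (hP 5) (hO 5) (by decide)
      (by have := hmono (show (4:Fin 8) < 5 by decide); omega)
    have h6 : 19 ≤ e 6 := gap_step 18 19 (hP 6) (hO 6) (by decide)
      (by have := hmono (show (5:Fin 8) < 6 by decide); omega)
    have h7 : 23 ≤ e 7 := gap_step 20 23 (hP 7) (hO 7) (by decide)
      (by have := hmono (show (6:Fin 8) < 7 by decide); omega)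
    have hprod : ∏ p ∈ S, f p = ∏ i : Fin 8, f (e i) := by
      refine (Finset.prod_bij (fun (i : Fin 8) _ => e i) (fun i _ => hmem i)
        (fun i _ j _ h => hmono.injective h) ?_ (fun i _ => rfl)).symm
      intro p hp
      have : p ∈ Set.range e := by
        rw [he, Finset.range_orderEmbOfFin]; exact hp
      obtain ⟨i, hi⟩ := this
      exact ⟨i, Finset.mem_univ i, hi⟩
    rw [hprod]
    have b0 := hanti 3 _ (le_refl 3) h0
    have b1 := hanti 5 _ (by norm_num) h1
    have b2 := hanti 7 _ (by norm_num) h2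
    have b3 := hanti 11 _ (by norm_num) h3
    have b4 := hanti 13 _ (by norm_num) h4
    have b5 := hanti 17 _ (by norm_num) h5
    have b6 := hanti 19 _ (by norm_num) h6
    have b7 := hanti 23 _ (by norm_num) h7
    have hle : (∏ i : Fin 8, f (e i)) ≤
        ∏ i : Fin 8, ![f 3, f 5, f 7, f 11, f 13, f 17, f 19, f 23] i :=
      Finset.prod_le_prod (fun i _ => (hpos _).le) (fun i _ => by
        fin_cases i <;> simp <;> assumption)
    refine le_trans hle (le_of_eq ?_)
    rw [Fin.prod_univ_eight]
    rfl
  | succ k ih =>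
    intro S hS hcard
    have hne : S.Nonempty := Finset.card_pos.mp (by omega)
    set M := S.max' hne with hM
    have hMmem : M ∈ S := S.max'_mem hne
    have herase : (S.erase M).card = 8 + k := by
      rw [Finset.card_erase_of_mem hMmem]; omega
    have hP : ∀ p ∈ S.erase M, p.Prime ∧ p % 2 = 1 :=
      fun p hp => hS p (Finset.mem_of_mem_erase hp)
    have hrec := ih (S.erase M) hP herase
    have hM5 : 5 ≤ M := by
      have hne' : (S.erase M).Nonempty := Finset.card_pos.mp (by omega)
      obtain ⟨a, ha⟩ := hne'
      have haS : a ∈ S := Finset.mem_of_mem_erase ha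
      have haM : a ≠ M := Finset.ne_of_mem_erase ha
      have haleM : a ≤ M := S.le_max' a haS
      obtain ⟨hpa, hoa⟩ := hS a haS
      obtain ⟨hpM, hoM⟩ := hS M hMmem
      have := hpa.two_le
      omega
    have hfM : f M ≤ 1 := le_trans (hanti 5 M (by norm_num) hM5) hle1
    have hprodpos : (0:ℝ) ≤ ∏ p ∈ S.erase M, f p :=
      Finset.prod_nonneg fun p _ => (hpos p).le
    calc ∏ p ∈ S, f p = f M * ∏ p ∈ S.erase M, f p :=
          (Finset.mul_prod_erase S f hMmem).symm
      _ ≤ 1 * ∏ p ∈ S.erase M, f p := mul_le_mul_of_nonneg_right hfM hprodpos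
      _ = ∏ p ∈ S.erase M, f p := one_mul _
      _ ≤ _ := hrec

private lemma rpow34_le {x c : ℝ} (hx : 0 ≤ x) (hc : 0 ≤ c) (h : x ^ (3:ℕ) ≤ c ^ (4:ℕ)) :
    x ^ ((3:ℝ)/4) ≤ c := by
  have h' : x ^ ((3:ℕ):ℝ) ≤ c ^ ((4:ℕ):ℝ) := by
    rw [Real.rpow_natCast, Real.rpow_natCast]; exact h
  have h2 : (x ^ ((3:ℕ):ℝ)) ^ ((1:ℝ)/4) ≤ (c ^ ((4:ℕ):ℝ)) ^ ((1:ℝ)/4) :=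
    Real.rpow_le_rpow (Real.rpow_nonneg hx _) h' (by norm_num)
  rw [← Real.rpow_mul hx, ← Real.rpow_mul hc] at h2
  norm_num at h2
  exact h2

private lemma rpow12_le {x c : ℝ} (hx : 0 ≤ x) (hc : 0 ≤ c) (h : x ≤ c ^ (2:ℕ)) :
    x ^ ((1:ℝ)/2) ≤ c := by
  have h' : x ^ ((1:ℕ):ℝ) ≤ c ^ ((2:ℕ):ℝ) := by
    rw [Real.rpow_natCast, Real.rpow_natCast]; simpa using h
  have h2 : (x ^ ((1:ℕ):ℝ)) ^ ((1:ℝ)/2) ≤ (c ^ ((2:ℕ):ℝ)) ^ ((1:ℝ)/2) :=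
    Real.rpow_le_rpow (Real.rpow_nonneg hx _) h' (by norm_num)
  rw [← Real.rpow_mul hx, ← Real.rpow_mul hc] at h2
  norm_num at h2
  exact h2

/-- For an odd squarefree integer `N` with at least `8` distinct prime factors, the key
inequality `(10/(3π)) (∏_{p ∣ N} (2 + p^{3/4})/(1+p) + 3 ∏_{p ∣ N} (2 + p^{1/2})/(1+p)) < 1/12`
holds. -/
theorem key_inequality_omega_ge_eight (N : ℕ) (hodd : Odd N) (hsf : Squarefree N)
    (hω : 8 ≤ N.primeFactors.card) :
    10 / (3 * Real.pi) *
        ((∏ p ∈ N.primeFactors, (2 + (p : ℝ) ^ ((3 : ℝ) / 4)) / (1 + (p : ℝ))) +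
          3 * ∏ p ∈ N.primeFactors, (2 + (p : ℝ) ^ ((1 : ℝ) / 2)) / (1 + (p : ℝ))) <
      1 / 12 := by
  have hS : ∀ p ∈ N.primeFactors, p.Prime ∧ p % 2 = 1 := by
    intro p hp
    have hpp : p.Prime := Nat.prime_of_mem_primeFactors hp
    have hdvd : p ∣ N := Nat.dvd_of_mem_primeFactors hp
    refine ⟨hpp, ?_⟩
    rcases hpp.eq_two_or_odd with h2 | h
    · exfalso
      rw [Nat.odd_iff] at hodd
      subst h2
      omega
    · exact h
  set f1 : ℕ → ℝ := fun p => (2 + (p : ℝ) ^ ((3 : ℝ) / 4)) / (1 + (p : ℝ)) with hf1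
  set f2 : ℕ → ℝ := fun p => (2 + (p : ℝ) ^ ((1 : ℝ) / 2)) / (1 + (p : ℝ)) with hf2
  have hpos1 : ∀ n, 0 < f1 n := by
    intro n
    have h1 : (0:ℝ) ≤ (n:ℝ) ^ ((3:ℝ)/4) := Real.rpow_nonneg (Nat.cast_nonneg n) _
    have h2 : (0:ℝ) < 2 + (n:ℝ) ^ ((3:ℝ)/4) := by linarith
    have hd : (0:ℝ) < 1 + (n:ℝ) := by positivity
    exact div_pos h2 hd
  have hpos2 : ∀ n, 0 < f2 n := by
    intro n
    have h1 : (0:ℝ) ≤ (n:ℝ) ^ ((1:ℝ)/2) := Real.rpow_nonneg (Nat.cast_nonneg n) _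
    have h2 : (0:ℝ) < 2 + (n:ℝ) ^ ((1:ℝ)/2) := by linarith
    have hd : (0:ℝ) < 1 + (n:ℝ) := by positivity
    exact div_pos h2 hd
  have hanti1 : ∀ n m : ℕ, 3 ≤ n → n ≤ m → f1 m ≤ f1 n :=
    fun n m h3 hnm => f_anti (by norm_num) (by norm_num) h3 hnm
  have hanti2 : ∀ n m : ℕ, 3 ≤ n → n ≤ m → f2 m ≤ f2 n :=
    fun n m h3 hnm => f_anti (by norm_num) (by norm_num) h3 hnm
  -- individual rational bounds
  have q34 : ∀ (p : ℕ) (c : ℝ), 0 ≤ c → ((p:ℝ)) ^ (3:ℕ) ≤ c ^ (4:ℕ) →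
      f1 p ≤ (2 + c) / (1 + (p:ℝ)) := by
    intro p c hc h
    have hb := rpow34_le (Nat.cast_nonneg p) hc h
    have hd : (0:ℝ) < 1 + (p:ℝ) := by positivity
    show (2 + (p : ℝ) ^ ((3 : ℝ) / 4)) / (1 + (p : ℝ)) ≤ _
    gcongr
  have q12 : ∀ (p : ℕ) (c : ℝ), 0 ≤ c → ((p:ℝ)) ≤ c ^ (2:ℕ) →
      f2 p ≤ (2 + c) / (1 + (p:ℝ)) := by
    intro p c hc h
    have hb := rpow12_le (Nat.cast_nonneg p) hc h
    have hd : (0:ℝ) < 1 + (p:ℝ) := by positivity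
    show (2 + (p : ℝ) ^ ((1 : ℝ) / 2)) / (1 + (p : ℝ)) ≤ _
    gcongr
  have hle1a : f1 5 ≤ 1 := by
    have := q34 5 4 (by norm_num) (by push_cast; norm_num)
    exact le_trans this (by norm_num)
  have hle1b : f2 5 ≤ 1 := by
    have := q12 5 4 (by norm_num) (by push_cast; norm_num)
    exact le_trans this (by norm_num)
  have hA := prod_le_top f1 hpos1 hanti1 hle1a (N.primeFactors.card - 8)
    N.primeFactors hS (by omega)
  have hB := prod_le_top f2 hpos2 hanti2 hle1b (N.primeFactors.card - 8)
    N.primeFactors hS (by omega)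
  have a0 := q34 3 (228/100) (by norm_num) (by push_cast; norm_num)
  have a1 := q34 5 (3344/1000) (by norm_num) (by push_cast; norm_num)
  have a2 := q34 7 (4304/1000) (by norm_num) (by push_cast; norm_num)
  have a3 := q34 11 (6041/1000) (by norm_num) (by push_cast; norm_num)
  have a4 := q34 13 (685/100) (by norm_num) (by push_cast; norm_num)
  have a5 := q34 17 (8373/1000) (by norm_num) (by push_cast; norm_num)
  have a6 := q34 19 (9101/1000) (by norm_num) (by push_cast; norm_num)
  have a7 := q34 23 (1051/100) (by norm_num) (by push_cast; norm_num)
  have c0 := q12 3 (17321/10000) (by norm_num) (by push_cast; norm_num)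
  have c1 := q12 5 (22361/10000) (by norm_num) (by push_cast; norm_num)
  have c2 := q12 7 (26458/10000) (by norm_num) (by push_cast; norm_num)
  have c3 := q12 11 (33167/10000) (by norm_num) (by push_cast; norm_num)
  have c4 := q12 13 (36056/10000) (by norm_num) (by push_cast; norm_num)
  have c5 := q12 17 (41232/10000) (by norm_num) (by push_cast; norm_num)
  have c6 := q12 19 (43589/10000) (by norm_num) (by push_cast; norm_num)
  have c7 := q12 23 (47959/10000) (by norm_num) (by push_cast; norm_num)
  have hAnum : f1 3 * f1 5 * f1 7 * f1 11 * f1 13 * f1 17 * f1 19 * f1 23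
      ≤ (531:ℝ)/10000 := by
    calc f1 3 * f1 5 * f1 7 * f1 11 * f1 13 * f1 17 * f1 19 * f1 23
        ≤ ((2 + 228/100) / (1 + ((3:ℕ):ℝ))) * ((2 + 3344/1000) / (1 + ((5:ℕ):ℝ))) *
          ((2 + 4304/1000) / (1 + ((7:ℕ):ℝ))) * ((2 + 6041/1000) / (1 + ((11:ℕ):ℝ))) *
          ((2 + 685/100) / (1 + ((13:ℕ):ℝ))) * ((2 + 8373/1000) / (1 + ((17:ℕ):ℝ))) *
          ((2 + 9101/1000) / (1 + ((19:ℕ):ℝ))) * ((2 + 1051/100) / (1 + ((23:ℕ):ℝ))) := by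
          gcongr <;> first
            | exact (hpos1 _).le
            | assumption
            | positivity
            | (apply le_of_lt; repeat' apply mul_pos; all_goals exact hpos1 _)
      _ ≤ (531:ℝ)/10000 := by push_cast; norm_num
  have hBnum : f2 3 * f2 5 * f2 7 * f2 11 * f2 13 * f2 17 * f2 19 * f2 23
      ≤ (208:ℝ)/100000 := by
    calc f2 3 * f2 5 * f2 7 * f2 11 * f2 13 * f2 17 * f2 19 * f2 23
        ≤ ((2 + 17321/10000) / (1 + ((3:ℕ):ℝ))) * ((2 + 22361/10000) / (1 + ((5:ℕ):ℝ))) *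
          ((2 + 26458/10000) / (1 + ((7:ℕ):ℝ))) * ((2 + 33167/10000) / (1 + ((11:ℕ):ℝ))) *
          ((2 + 36056/10000) / (1 + ((13:ℕ):ℝ))) * ((2 + 41232/10000) / (1 + ((17:ℕ):ℝ))) *
          ((2 + 43589/10000) / (1 + ((19:ℕ):ℝ))) * ((2 + 47959/10000) / (1 + ((23:ℕ):ℝ))) := by
          gcongr <;> first
            | exact (hpos2 _).le
            | assumption
            | positivity
            | (apply le_of_lt; repeat' apply mul_pos; all_goals exact hpos2 _)
      _ ≤ (208:ℝ)/100000 := by push_cast; norm_num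
  have hA' : (∏ p ∈ N.primeFactors, f1 p) ≤ (531:ℝ)/10000 := le_trans hA hAnum
  have hB' : (∏ p ∈ N.primeFactors, f2 p) ≤ (208:ℝ)/100000 := le_trans hB hBnum
  have hApos : (0:ℝ) ≤ ∏ p ∈ N.primeFactors, f1 p :=
    Finset.prod_nonneg fun p _ => (hpos1 p).le
  have hBpos : (0:ℝ) ≤ ∏ p ∈ N.primeFactors, f2 p :=
    Finset.prod_nonneg fun p _ => (hpos2 p).le
  have hπ : (3.141592:ℝ) < Real.pi := Real.pi_gt_d6
  have hπ0 : (0:ℝ) < 3 * Real.pi := by linarith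
  have hfrac : 10 / (3 * Real.pi) ≤ 10 / (3 * 3.141592) := by
    apply div_le_div_of_nonneg_left (by norm_num) (by norm_num) (by linarith)
  have hsum : (∏ p ∈ N.primeFactors, f1 p) + 3 * (∏ p ∈ N.primeFactors, f2 p)
      ≤ (594:ℝ)/10000 := by
    linarith
  have hsumpos : (0:ℝ) ≤ (∏ p ∈ N.primeFactors, f1 p) +
      3 * (∏ p ∈ N.primeFactors, f2 p) := by linarith
  calc 10 / (3 * Real.pi) *
        ((∏ p ∈ N.primeFactors, f1 p) + 3 * ∏ p ∈ N.primeFactors, f2 p)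
      ≤ (10 / (3 * 3.141592)) * ((594:ℝ)/10000) := by
        apply mul_le_mul hfrac hsum hsumpos (by norm_num)
    _ < 1 / 12 := by norm_num
end

section
/- Let N be an odd squarefree integer with ω(N) = 3 such that the smallest prime factor of N is at least 53 or the largest prime factor of N is greater than 37993. Then (10/(3π)) · ( ∏_{p prime, p ∣ N} (2 + p^{3/4})/(1 + p) + 3 · ∏_{p prime, p ∣ N} (2 + p^{1/2})/(1 + p) ) < 1/12. -/
open Finset

noncomputable def Fn (x : ℝ) : ℝ := (2 + x ^ ((3 : ℝ) / 4)) / (1 + x)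
noncomputable def Gn (x : ℝ) : ℝ := (2 + x ^ ((1 : ℝ) / 2)) / (1 + x)

lemma Fn_nonneg {x : ℝ} (hx : 0 ≤ x) : 0 ≤ Fn x := by
  unfold Fn; positivity

lemma Gn_nonneg {x : ℝ} (hx : 0 ≤ x) : 0 ≤ Gn x := by
  unfold Gn; positivity

lemma Fn_anti {x y : ℝ} (hx : 1 ≤ x) (hxy : x ≤ y) : Fn y ≤ Fn x := by
  have hx0 : (0:ℝ) ≤ x := by linarith
  have hy0 : (0:ℝ) ≤ y := by linarith
  set u := x ^ ((1:ℝ)/4) with hu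
  set v := y ^ ((1:ℝ)/4) with hv
  have hu1 : 1 ≤ u := Real.one_le_rpow hx (by norm_num)
  have huv : u ≤ v := Real.rpow_le_rpow hx0 hxy (by norm_num)
  have hx34 : x ^ ((3:ℝ)/4) = u ^ 3 := by
    rw [hu, ← Real.rpow_natCast (x ^ ((1:ℝ)/4)) 3, ← Real.rpow_mul hx0]; norm_num
  have hy34 : y ^ ((3:ℝ)/4) = v ^ 3 := by
    rw [hv, ← Real.rpow_natCast (y ^ ((1:ℝ)/4)) 3, ← Real.rpow_mul hy0]; norm_num
  have hx4 : x = u ^ 4 := by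
    rw [hu, ← Real.rpow_natCast (x ^ ((1:ℝ)/4)) 4, ← Real.rpow_mul hx0]; norm_num
  have hy4 : y = v ^ 4 := by
    rw [hv, ← Real.rpow_natCast (y ^ ((1:ℝ)/4)) 4, ← Real.rpow_mul hy0]; norm_num
  unfold Fn
  rw [hx34, hy34]
  rw [show (1:ℝ) + x = 1 + u ^ 4 by rw [← hx4], show (1:ℝ) + y = 1 + v ^ 4 by rw [← hy4]]
  rw [div_le_div_iff₀ (by positivity) (by positivity)]
  nlinarith [mul_nonneg (mul_nonneg (pow_nonneg (by linarith : (0:ℝ) ≤ u) 3) (pow_nonneg (by linarith : (0:ℝ) ≤ v) 3)) (by linarith : (0:ℝ) ≤ v - u),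
    mul_nonneg (mul_nonneg (by linarith : (0:ℝ) ≤ v - u) (by nlinarith : (0:ℝ) ≤ u^2 + u*v + v^2)) (by linarith : (0:ℝ) ≤ v - 1),
    mul_nonneg (pow_nonneg (by linarith : (0:ℝ) ≤ u) 3) (by linarith : (0:ℝ) ≤ v - u),
    mul_nonneg (mul_nonneg (by linarith : (0:ℝ) ≤ v - u) (by linarith : (0:ℝ) ≤ v + u)) (by nlinarith : (0:ℝ) ≤ v^2 + u^2)]

lemma Gn_anti {x y : ℝ} (hx : 1 ≤ x) (hxy : x ≤ y) : Gn y ≤ Gn x := by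
  have hx0 : (0:ℝ) ≤ x := by linarith
  have hy0 : (0:ℝ) ≤ y := by linarith
  set u := x ^ ((1:ℝ)/2) with hu
  set v := y ^ ((1:ℝ)/2) with hv
  have hu1 : 1 ≤ u := Real.one_le_rpow hx (by norm_num)
  have huv : u ≤ v := Real.rpow_le_rpow hx0 hxy (by norm_num)
  have hx2 : x = u ^ 2 := by
    rw [hu, ← Real.rpow_natCast (x ^ ((1:ℝ)/2)) 2, ← Real.rpow_mul hx0]; norm_num
  have hy2 : y = v ^ 2 := by
    rw [hv, ← Real.rpow_natCast (y ^ ((1:ℝ)/2)) 2, ← Real.rpow_mul hy0]; norm_num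
  unfold Gn
  rw [show (1:ℝ) + x = 1 + u ^ 2 by rw [← hx2], show (1:ℝ) + y = 1 + v ^ 2 by rw [← hy2]]
  rw [div_le_div_iff₀ (by positivity) (by positivity)]
  nlinarith [mul_nonneg (by linarith : (0:ℝ) ≤ v - u) (by nlinarith : (0:ℝ) ≤ u*v - 1),
    mul_nonneg (mul_nonneg (by linarith : (0:ℝ) ≤ v - u) (by linarith : (0:ℝ) ≤ v + u)) (by linarith : (0:ℝ) ≤ u)]

lemma Fn_le {c a : ℝ} (x : ℝ) (hc : 1 ≤ c) (hcx : c ≤ x) (ha : 0 ≤ a)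
    (h : c ^ 3 ≤ a ^ 4) : Fn x ≤ (2 + a) / (1 + c) := by
  refine (Fn_anti hc hcx).trans ?_
  have hc0 : (0:ℝ) ≤ c := by linarith
  have key : c ^ ((3:ℝ)/4) ≤ a := by
    refine le_of_pow_le_pow_left₀ (n := 4) (by norm_num) ha ?_
    calc (c ^ ((3:ℝ)/4)) ^ 4 = c ^ 3 := by
          rw [← Real.rpow_natCast (c ^ ((3:ℝ)/4)) 4, ← Real.rpow_mul hc0,
            ← Real.rpow_natCast c 3]; norm_num
      _ ≤ a ^ 4 := h
  unfold Fn
  gcongr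

lemma Gn_le {c a : ℝ} (x : ℝ) (hc : 1 ≤ c) (hcx : c ≤ x) (ha : 0 ≤ a)
    (h : c ≤ a ^ 2) : Gn x ≤ (2 + a) / (1 + c) := by
  refine (Gn_anti hc hcx).trans ?_
  have hc0 : (0:ℝ) ≤ c := by linarith
  have key : c ^ ((1:ℝ)/2) ≤ a := by
    refine le_of_pow_le_pow_left₀ (n := 2) (by norm_num) ha ?_
    calc (c ^ ((1:ℝ)/2)) ^ 2 = c ^ (1:ℕ) := by
          rw [← Real.rpow_natCast (c ^ ((1:ℝ)/2)) 2, ← Real.rpow_mul hc0,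
            ← Real.rpow_natCast c 1]; norm_num
      _ = c := pow_one c
      _ ≤ a ^ 2 := h
  unfold Gn
  gcongr

lemma core (p q r : ℕ) (hp : p.Prime) (hq : q.Prime) (hr : r.Prime)
    (h2 : 2 < p) (hpq : p < q) (hqr : q < r) (hyp : 53 ≤ p ∨ 37993 < r) :
    Fn p * Fn q * Fn r + 3 * (Gn p * Gn q * Gn r) < Real.pi / 40 := by
  have hpi := Real.pi_gt_d6
  have hFp0 : (0:ℝ) ≤ Fn p := Fn_nonneg (by positivity)
  have hFq0 : (0:ℝ) ≤ Fn q := Fn_nonneg (by positivity)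
  have hFr0 : (0:ℝ) ≤ Fn r := Fn_nonneg (by positivity)
  have hGp0 : (0:ℝ) ≤ Gn p := Gn_nonneg (by positivity)
  have hGq0 : (0:ℝ) ≤ Gn q := Gn_nonneg (by positivity)
  have hGr0 : (0:ℝ) ≤ Gn r := Gn_nonneg (by positivity)
  rcases hyp with h53 | hbig
  · -- all primes ≥ 53, so sorted they are ≥ 53, 59, 61
    have hq59 : 59 ≤ q := by
      by_contra hcon
      push_neg at hcon
      have h54 : 54 ≤ q := by omega
      interval_cases q <;> revert hq <;> decide
    have hr61 : 61 ≤ r := by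
      by_contra hcon
      push_neg at hcon
      have h60 : 60 ≤ r := by omega
      interval_cases r <;> revert hr <;> decide
    have bFp : Fn p ≤ (2 + 19642959/1000000) / (1 + 53) :=
      Fn_le _ (by norm_num) (by exact_mod_cast h53) (by norm_num) (by norm_num)
    have bFq : Fn q ≤ (2 + 5322051/250000) / (1 + 59) :=
      Fn_le _ (by norm_num) (by exact_mod_cast hq59) (by norm_num) (by norm_num)
    have bFr : Fn r ≤ (2 + 682099/31250) / (1 + 61) :=
      Fn_le _ (by norm_num) (by exact_mod_cast hr61) (by norm_num) (by norm_num)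
    have bGp : Gn p ≤ (2 + 728011/100000) / (1 + 53) :=
      Gn_le _ (by norm_num) (by exact_mod_cast h53) (by norm_num) (by norm_num)
    have bGq : Gn q ≤ (2 + 3840573/500000) / (1 + 59) :=
      Gn_le _ (by norm_num) (by exact_mod_cast hq59) (by norm_num) (by norm_num)
    have bGr : Gn r ≤ (2 + 31241/4000) / (1 + 61) :=
      Gn_le _ (by norm_num) (by exact_mod_cast hr61) (by norm_num) (by norm_num)
    have P1 : Fn p * Fn q * Fn r ≤
        ((2 + 19642959/1000000) / (1 + 53)) * ((2 + 5322051/250000) / (1 + 59)) *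
          ((2 + 682099/31250) / (1 + 61)) :=
      mul_le_mul (mul_le_mul bFp bFq hFq0 (by norm_num)) bFr hFr0 (by norm_num)
    have Q1 : Gn p * Gn q * Gn r ≤
        ((2 + 728011/100000) / (1 + 53)) * ((2 + 3840573/500000) / (1 + 59)) *
          ((2 + 31241/4000) / (1 + 61)) :=
      mul_le_mul (mul_le_mul bGp bGq hGq0 (by norm_num)) bGr hGr0 (by norm_num)
    have hnum : ((2 + 19642959/1000000) / (1 + 53)) * ((2 + 5322051/250000) / (1 + 59)) *
          ((2 + 682099/31250) / (1 + 61)) +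
        3 * (((2 + 728011/100000) / (1 + 53)) * ((2 + 3840573/500000) / (1 + 59)) *
          ((2 + 31241/4000) / (1 + 61))) < (3.141592 : ℝ) / 40 := by norm_num
    linarith
  · have hp3 : 3 ≤ p := h2
    have hq5 : 5 ≤ q := by
      by_contra hcon
      push_neg at hcon
      have h4 : q = 4 := by omega
      rw [h4] at hq
      revert hq
      decide
    have hrR : 37994 ≤ r := by omega
    have bFp : Fn p ≤ (2 + 22795071/10000000) / (1 + 3) :=
      Fn_le _ (by norm_num) (by exact_mod_cast hp3) (by norm_num) (by norm_num)
    have bFq : Fn q ≤ (2 + 4179627/1250000) / (1 + 5) :=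
      Fn_le _ (by norm_num) (by exact_mod_cast hq5) (by norm_num) (by norm_num)
    have bFr : Fn r ≤ (2 + 27213617/10000) / (1 + 37994) :=
      Fn_le _ (by norm_num) (by exact_mod_cast hrR) (by norm_num) (by norm_num)
    have bGp : Gn p ≤ (2 + 17320509/10000000) / (1 + 3) :=
      Gn_le _ (by norm_num) (by exact_mod_cast hp3) (by norm_num) (by norm_num)
    have bGq : Gn q ≤ (2 + 559017/250000) / (1 + 5) :=
      Gn_le _ (by norm_num) (by exact_mod_cast hq5) (by norm_num) (by norm_num)
    have bGr : Gn r ≤ (2 + 389841/2000) / (1 + 37994) :=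
      Gn_le _ (by norm_num) (by exact_mod_cast hrR) (by norm_num) (by norm_num)
    have P1 : Fn p * Fn q * Fn r ≤
        ((2 + 22795071/10000000) / (1 + 3)) * ((2 + 4179627/1250000) / (1 + 5)) *
          ((2 + 27213617/10000) / (1 + 37994)) :=
      mul_le_mul (mul_le_mul bFp bFq hFq0 (by norm_num)) bFr hFr0 (by norm_num)
    have Q1 : Gn p * Gn q * Gn r ≤
        ((2 + 17320509/10000000) / (1 + 3)) * ((2 + 559017/250000) / (1 + 5)) *
          ((2 + 389841/2000) / (1 + 37994)) :=
      mul_le_mul (mul_le_mul bGp bGq hGq0 (by norm_num)) bGr hGr0 (by norm_num)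
    have hnum : ((2 + 22795071/10000000) / (1 + 3)) * ((2 + 4179627/1250000) / (1 + 5)) *
          ((2 + 27213617/10000) / (1 + 37994)) +
        3 * (((2 + 17320509/10000000) / (1 + 3)) * ((2 + 559017/250000) / (1 + 5)) *
          ((2 + 389841/2000) / (1 + 37994))) < (3.141592 : ℝ) / 40 := by norm_num
    linarith

lemma core' (a b c : ℕ) (ha : a.Prime) (hb : b.Prime) (hc : c.Prime)
    (h2a : 2 < a) (h2b : 2 < b) (h2c : 2 < c)
    (hab : a ≠ b) (hac : a ≠ c) (hbc : b ≠ c)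
    (hyp : (53 ≤ a ∧ 53 ≤ b ∧ 53 ≤ c) ∨ (37993 < a ∨ 37993 < b ∨ 37993 < c)) :
    Fn a * (Fn b * Fn c) + 3 * (Gn a * (Gn b * Gn c)) < Real.pi / 40 := by
  rcases Nat.lt_or_ge a b with h1 | h1
  · rcases Nat.lt_or_ge b c with h2 | h2
    · -- a < b < c
      have h := core a b c ha hb hc h2a h1 h2
        (hyp.imp (fun h => h.1) (fun h => by omega))
      calc Fn a * (Fn b * Fn c) + 3 * (Gn a * (Gn b * Gn c))
          = Fn ↑a * Fn ↑b * Fn ↑c + 3 * (Gn ↑a * Gn ↑b * Gn ↑c) := by ring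
        _ < Real.pi / 40 := h
    · rcases Nat.lt_or_ge a c with h3 | h3
      · -- a < c < b
        have h := core a c b ha hc hb h2a h3 (by omega)
          (hyp.imp (fun h => h.1) (fun h => by omega))
        calc Fn a * (Fn b * Fn c) + 3 * (Gn a * (Gn b * Gn c))
            = Fn ↑a * Fn ↑c * Fn ↑b + 3 * (Gn ↑a * Gn ↑c * Gn ↑b) := by ring
          _ < Real.pi / 40 := h
      · -- c < a < b
        have h := core c a b hc ha hb h2c (by omega) h1
          (hyp.imp (fun h => h.2.2) (fun h => by omega))
        calc Fn a * (Fn b * Fn c) + 3 * (Gn a * (Gn b * Gn c))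
            = Fn ↑c * Fn ↑a * Fn ↑b + 3 * (Gn ↑c * Gn ↑a * Gn ↑b) := by ring
          _ < Real.pi / 40 := h
  · rcases Nat.lt_or_ge a c with h2 | h2
    · -- b < a < c
      have h := core b a c hb ha hc h2b (by omega) h2
        (hyp.imp (fun h => h.2.1) (fun h => by omega))
      calc Fn a * (Fn b * Fn c) + 3 * (Gn a * (Gn b * Gn c))
          = Fn ↑b * Fn ↑a * Fn ↑c + 3 * (Gn ↑b * Gn ↑a * Gn ↑c) := by ring
        _ < Real.pi / 40 := h
    · rcases Nat.lt_or_ge b c with h3 | h3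
      · -- b < c < a
        have h := core b c a hb hc ha h2b h3 (by omega)
          (hyp.imp (fun h => h.2.1) (fun h => by omega))
        calc Fn a * (Fn b * Fn c) + 3 * (Gn a * (Gn b * Gn c))
            = Fn ↑b * Fn ↑c * Fn ↑a + 3 * (Gn ↑b * Gn ↑c * Gn ↑a) := by ring
          _ < Real.pi / 40 := h
      · -- c < b < a
        have h := core c b a hc hb ha h2c (by omega) (by omega)
          (hyp.imp (fun h => h.2.2) (fun h => by omega))
        calc Fn a * (Fn b * Fn c) + 3 * (Gn a * (Gn b * Gn c))
            = Fn ↑c * Fn ↑b * Fn ↑a + 3 * (Gn ↑c * Gn ↑b * Gn ↑a) := by ring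
          _ < Real.pi / 40 := h


/-- For an odd squarefree integer `N` with exactly `3` distinct prime factors whose smallest
prime factor is at least `53` or whose largest prime factor is greater than `37993`, the key
inequality holds. -/
theorem key_inequality_omega_eq_3 (N : ℕ) (hodd : Odd N) (hsf : Squarefree N)
    (hω : N.primeFactors.card = 3)
    (hP : (∀ p ∈ N.primeFactors, 53 ≤ p) ∨ (∃ p ∈ N.primeFactors, 37993 < p)) :
    10 / (3 * Real.pi) *
        ((∏ p ∈ N.primeFactors, (2 + (p : ℝ) ^ ((3 : ℝ) / 4)) / (1 + (p : ℝ))) +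
          3 * ∏ p ∈ N.primeFactors, (2 + (p : ℝ) ^ ((1 : ℝ) / 2)) / (1 + (p : ℝ))) <
      1 / 12 := by
  obtain ⟨a, b, c, hab, hac, hbc, hs⟩ := Finset.card_eq_three.mp hω
  have hma : a ∈ N.primeFactors := by rw [hs]; simp
  have hmb : b ∈ N.primeFactors := by rw [hs]; simp
  have hmc : c ∈ N.primeFactors := by rw [hs]; simp
  have hpa := Nat.prime_of_mem_primeFactors hma
  have hpb := Nat.prime_of_mem_primeFactors hmb
  have hpc := Nat.prime_of_mem_primeFactors hmc
  have hoddfac : ∀ p ∈ N.primeFactors, 2 < p := by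
    intro p hpmem
    have hpp := Nat.prime_of_mem_primeFactors hpmem
    have hdvd := Nat.dvd_of_mem_primeFactors hpmem
    rcases Nat.lt_or_ge 2 p with h | h
    · exact h
    · interval_cases p
      · exact absurd rfl hpp.ne_zero
      · exact absurd rfl hpp.ne_one
      · exfalso
        rw [Nat.odd_iff] at hodd
        omega
  have h2a := hoddfac a hma
  have h2b := hoddfac b hmb
  have h2c := hoddfac c hmc
  have hnotmem : a ∉ ({b, c} : Finset ℕ) := by simp [hab, hac]
  have e1 : (∏ p ∈ N.primeFactors, (2 + (p : ℝ) ^ ((3 : ℝ) / 4)) / (1 + (p : ℝ)))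
      = Fn a * (Fn b * Fn c) := by
    rw [hs, Finset.prod_insert hnotmem, Finset.prod_pair hbc]
    rfl
  have e2 : (∏ p ∈ N.primeFactors, (2 + (p : ℝ) ^ ((1 : ℝ) / 2)) / (1 + (p : ℝ)))
      = Gn a * (Gn b * Gn c) := by
    rw [hs, Finset.prod_insert hnotmem, Finset.prod_pair hbc]
    rfl
  rw [e1, e2]
  have hyp : (53 ≤ a ∧ 53 ≤ b ∧ 53 ≤ c) ∨ (37993 < a ∨ 37993 < b ∨ 37993 < c) := by
    rcases hP with h | ⟨x, hx, hx'⟩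
    · exact Or.inl ⟨h a hma, h b hmb, h c hmc⟩
    · right
      rw [hs] at hx
      simp only [Finset.mem_insert, Finset.mem_singleton] at hx
      rcases hx with rfl | rfl | rfl
      · exact Or.inl hx'
      · exact Or.inr (Or.inl hx')
      · exact Or.inr (Or.inr hx')
  have hcore := core' a b c hpa hpb hpc h2a h2b h2c hab hac hbc hyp
  have hS0 : 0 ≤ Fn a * (Fn b * Fn c) + 3 * (Gn a * (Gn b * Gn c)) := by
    have n1 : (0:ℝ) ≤ Fn a := Fn_nonneg (by positivity)
    have n2 : (0:ℝ) ≤ Fn b := Fn_nonneg (by positivity)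
    have n3 : (0:ℝ) ≤ Fn c := Fn_nonneg (by positivity)
    have n4 : (0:ℝ) ≤ Gn a := Gn_nonneg (by positivity)
    have n5 : (0:ℝ) ≤ Gn b := Gn_nonneg (by positivity)
    have n6 : (0:ℝ) ≤ Gn c := Gn_nonneg (by positivity)
    positivity
  have hπ : (0:ℝ) < Real.pi := Real.pi_pos
  calc 10 / (3 * Real.pi) * (Fn a * (Fn b * Fn c) + 3 * (Gn a * (Gn b * Gn c)))
      < 10 / (3 * Real.pi) * (Real.pi / 40) := by
        apply mul_lt_mul_of_pos_left hcore (by positivity)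
    _ = 1 / 12 := by
        field_simp
        ring
end

section
/- Let N be an odd squarefree integer with ω(N) = 2 such that the smallest prime factor of N is at least 269 or the largest prime factor of N is greater than 63737. Then (10/(3π)) · ( ∏_{p prime, p ∣ N} (2 + p^{3/4})/(1 + p) + 3 · ∏_{p prime, p ∣ N} (2 + p^{1/2})/(1 + p) ) < 1/12. -/
open Finset

private lemma rpow34_bound (x c P : ℝ) (hP : 0 < P) (hx : P ≤ x) (hc0 : 0 < c)
    (hc2 : c ≤ 2) (hc : 1 ≤ P * c ^ 4) :
    (2 + x ^ ((3 : ℝ) / 4)) / (1 + x) ≤ c + (2 - c) / (1 + P) := by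
  have hx0 : 0 < x := lt_of_lt_of_le hP hx
  have ha0 : 0 ≤ x ^ ((3 : ℝ) / 4) := Real.rpow_nonneg hx0.le _
  have ha4 : (x ^ ((3 : ℝ) / 4)) ^ (4 : ℕ) = x ^ (3 : ℕ) := by
    rw [← Real.rpow_natCast (x ^ ((3 : ℝ) / 4)) 4, ← Real.rpow_mul hx0.le,
      ← Real.rpow_natCast x 3]
    norm_num
  have key : x ^ ((3 : ℝ) / 4) ≤ c * x := by
    have h1 : 1 ≤ c ^ 4 * x := by
      nlinarith [mul_le_mul_of_nonneg_left hx (pow_pos hc0 4).le]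
    have h4 : (x ^ ((3 : ℝ) / 4)) ^ (4 : ℕ) ≤ (c * x) ^ (4 : ℕ) := by
      rw [ha4]
      calc x ^ (3 : ℕ) = 1 * x ^ 3 := by ring
        _ ≤ (c ^ 4 * x) * x ^ 3 :=
            mul_le_mul_of_nonneg_right h1 (pow_nonneg hx0.le 3)
        _ = (c * x) ^ 4 := by ring
    exact le_of_pow_le_pow_left₀ (by norm_num) (by positivity) h4
  have hden : 0 < 1 + x := by linarith
  have hB : 0 ≤ (2 - c) / (1 + P) := div_nonneg (by linarith) (by linarith)
  have hBP : (2 - c) / (1 + P) * (1 + P) = 2 - c := div_mul_cancel₀ _ (by linarith)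
  rw [div_le_iff₀ hden]
  nlinarith [mul_le_mul_of_nonneg_left hx hB, key]

private lemma rpow12_bound (x c P : ℝ) (hP : 0 < P) (hx : P ≤ x) (hc0 : 0 < c)
    (hc2 : c ≤ 2) (hc : 1 ≤ P * c ^ 2) :
    (2 + x ^ ((1 : ℝ) / 2)) / (1 + x) ≤ c + (2 - c) / (1 + P) := by
  have hx0 : 0 < x := lt_of_lt_of_le hP hx
  have ha0 : 0 ≤ x ^ ((1 : ℝ) / 2) := Real.rpow_nonneg hx0.le _
  have ha2 : (x ^ ((1 : ℝ) / 2)) ^ (2 : ℕ) = x ^ (1 : ℕ) := by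
    rw [← Real.rpow_natCast (x ^ ((1 : ℝ) / 2)) 2, ← Real.rpow_mul hx0.le,
      ← Real.rpow_natCast x 1]
    norm_num
  have key : x ^ ((1 : ℝ) / 2) ≤ c * x := by
    have h1 : 1 ≤ c ^ 2 * x := by
      nlinarith [mul_le_mul_of_nonneg_left hx (pow_pos hc0 2).le]
    have h2 : (x ^ ((1 : ℝ) / 2)) ^ (2 : ℕ) ≤ (c * x) ^ (2 : ℕ) := by
      rw [ha2]
      calc x ^ (1 : ℕ) = 1 * x := by ring
        _ ≤ (c ^ 2 * x) * x := mul_le_mul_of_nonneg_right h1 hx0.le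
        _ = (c * x) ^ 2 := by ring
    exact le_of_pow_le_pow_left₀ (by norm_num) (by positivity) h2
  have hden : 0 < 1 + x := by linarith
  have hB : 0 ≤ (2 - c) / (1 + P) := div_nonneg (by linarith) (by linarith)
  have hBP : (2 - c) / (1 + P) * (1 + P) = 2 - c := div_mul_cancel₀ _ (by linarith)
  rw [div_le_iff₀ hden]
  nlinarith [mul_le_mul_of_nonneg_left hx hB, key]

private lemma nonneg_f (a : ℝ) (ha : 0 ≤ a) (r : ℝ) :
    0 ≤ (2 + a ^ r) / (1 + a) :=
  div_nonneg (by have := Real.rpow_nonneg ha r; linarith) (by linarith)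

private lemma case_small_big (a b : ℝ) (ha : 3 ≤ a) (hb : 63743 ≤ b) :
    (2 + a ^ ((3 : ℝ) / 4)) / (1 + a) * ((2 + b ^ ((3 : ℝ) / 4)) / (1 + b)) +
      3 * ((2 + a ^ ((1 : ℝ) / 2)) / (1 + a) * ((2 + b ^ ((1 : ℝ) / 2)) / (1 + b))) <
      3.141592 / 40 := by
  have ha0 : (0 : ℝ) ≤ a := by linarith
  have hb0 : (0 : ℝ) ≤ b := by linarith
  have hfa := rpow34_bound a (379917843 / 500000000) 3 (by norm_num) ha (by norm_num)
    (by norm_num) (by norm_num)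
  have hfb := rpow34_bound b (15733737 / 250000000) 63743 (by norm_num) hb (by norm_num)
    (by norm_num) (by norm_num)
  have hga := rpow12_bound a (57735027 / 100000000) 3 (by norm_num) ha (by norm_num)
    (by norm_num) (by norm_num)
  have hgb := rpow12_bound b (495101 / 125000000) 63743 (by norm_num) hb (by norm_num)
    (by norm_num) (by norm_num)
  have h1 := mul_le_mul hfa hfb (nonneg_f b hb0 _) (by norm_num)
  have h2 := mul_le_mul hga hgb (nonneg_f b hb0 _) (by norm_num)
  have hnum : (379917843 / 500000000 + (2 - 379917843 / 500000000) / (1 + 3)) *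
      (15733737 / 250000000 + (2 - 15733737 / 250000000) / (1 + 63743)) +
      3 * ((57735027 / 100000000 + (2 - 57735027 / 100000000) / (1 + 3)) *
      (495101 / 125000000 + (2 - 495101 / 125000000) / (1 + 63743))) <
      (3.141592 : ℝ) / 40 := by norm_num
  linarith

private lemma case_both_big (a b : ℝ) (ha : 269 ≤ a) (hb : 271 ≤ b) :
    (2 + a ^ ((3 : ℝ) / 4)) / (1 + a) * ((2 + b ^ ((3 : ℝ) / 4)) / (1 + b)) +
      3 * ((2 + a ^ ((1 : ℝ) / 2)) / (1 + a) * ((2 + b ^ ((1 : ℝ) / 2)) / (1 + b))) <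
      3.141592 / 40 := by
  have ha0 : (0 : ℝ) ≤ a := by linarith
  have hb0 : (0 : ℝ) ≤ b := by linarith
  have hfa := rpow34_bound a (247 / 1000) 269 (by norm_num) ha (by norm_num)
    (by norm_num) (by norm_num)
  have hfb := rpow34_bound b (2466 / 10000) 271 (by norm_num) hb (by norm_num)
    (by norm_num) (by norm_num)
  have hga := rpow12_bound a (61 / 1000) 269 (by norm_num) ha (by norm_num)
    (by norm_num) (by norm_num)
  have hgb := rpow12_bound b (608 / 10000) 271 (by norm_num) hb (by norm_num)
    (by norm_num) (by norm_num)
  have h1 := mul_le_mul hfa hfb (nonneg_f b hb0 _) (by norm_num)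
  have h2 := mul_le_mul hga hgb (nonneg_f b hb0 _) (by norm_num)
  have hnum : (247 / 1000 + (2 - 247 / 1000) / (1 + 269)) *
      (2466 / 10000 + (2 - 2466 / 10000) / (1 + 271)) +
      3 * ((61 / 1000 + (2 - 61 / 1000) / (1 + 269)) *
      (608 / 10000 + (2 - 608 / 10000) / (1 + 271))) < (3.141592 : ℝ) / 40 := by norm_num
  linarith

/-- For an odd squarefree integer `N` with exactly `2` distinct prime factors whose smallest
prime factor is at least `269` or whose largest prime factor is greater than `63737`, the key
inequality holds. -/
theorem key_inequality_omega_eq_2 (N : ℕ) (hodd : Odd N) (hsf : Squarefree N)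
    (hω : N.primeFactors.card = 2)
    (hP : (∀ p ∈ N.primeFactors, 269 ≤ p) ∨ (∃ p ∈ N.primeFactors, 63737 < p)) :
    10 / (3 * Real.pi) *
        ((∏ p ∈ N.primeFactors, (2 + (p : ℝ) ^ ((3 : ℝ) / 4)) / (1 + (p : ℝ))) +
          3 * ∏ p ∈ N.primeFactors, (2 + (p : ℝ) ^ ((1 : ℝ) / 2)) / (1 + (p : ℝ))) <
      1 / 12 := by
  obtain ⟨p, q, hpq, hset⟩ := Finset.card_eq_two.mp hω
  have hpmem : p ∈ N.primeFactors := by rw [hset]; simp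
  have hqmem : q ∈ N.primeFactors := by rw [hset]; simp
  have hp := Nat.prime_of_mem_primeFactors hpmem
  have hq := Nat.prime_of_mem_primeFactors hqmem
  have hoddd : ∀ r : ℕ, r ∈ N.primeFactors → r % 2 = 1 := by
    intro r hr
    rcases (Nat.prime_of_mem_primeFactors hr).eq_two_or_odd with h | h
    · exfalso
      subst h
      obtain ⟨k, hk⟩ := Nat.dvd_of_mem_primeFactors hr
      rw [Nat.odd_iff] at hodd
      omega
    · exact h
  have hpodd := hoddd p hpmem
  have hqodd := hoddd q hqmem
  have hp3 : 3 ≤ p := by have := hp.two_le; omega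
  have hq3 : 3 ≤ q := by have := hq.two_le; omega
  have hbig : ∀ x : ℕ, x.Prime → x % 2 = 1 → 63737 < x → 63743 ≤ x := by
    intro x hx h2 h37
    have h1 : x ≠ 63739 := by rintro rfl; norm_num at hx
    have h1' : x ≠ 63741 := by rintro rfl; norm_num at hx
    omega
  have hS : (2 + (p : ℝ) ^ ((3 : ℝ) / 4)) / (1 + (p : ℝ)) *
        ((2 + (q : ℝ) ^ ((3 : ℝ) / 4)) / (1 + (q : ℝ))) +
      3 * ((2 + (p : ℝ) ^ ((1 : ℝ) / 2)) / (1 + (p : ℝ)) *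
        ((2 + (q : ℝ) ^ ((1 : ℝ) / 2)) / (1 + (q : ℝ)))) < 3.141592 / 40 := by
    rcases hP with hall | ⟨r, hrmem, hr⟩
    · have hp269 := hall p hpmem
      have hq269 := hall q hqmem
      have h271 : 271 ≤ p ∨ 271 ≤ q := by omega
      rcases h271 with h | h
      · have := case_both_big (q : ℝ) (p : ℝ) (by exact_mod_cast hq269)
          (by exact_mod_cast h)
        linarith [this]
      · exact case_both_big (p : ℝ) (q : ℝ) (by exact_mod_cast hp269)
          (by exact_mod_cast h)
    · rw [hset, Finset.mem_insert, Finset.mem_singleton] at hrmem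
      rcases hrmem with rfl | rfl
      · have hr43 : 63743 ≤ r := hbig r hp hpodd hr
        have := case_small_big (q : ℝ) (r : ℝ) (by exact_mod_cast hq3)
          (by exact_mod_cast hr43)
        linarith [this]
      · have hr43 : 63743 ≤ r := hbig r hq hqodd hr
        exact case_small_big (p : ℝ) (r : ℝ) (by exact_mod_cast hp3)
          (by exact_mod_cast hr43)
  rw [hset, Finset.prod_pair hpq, Finset.prod_pair hpq]
  have hπ := Real.pi_gt_d6
  have hπ0 : (0 : ℝ) < Real.pi := Real.pi_pos
  have hkey : 10 / (3 * Real.pi) * (Real.pi / 40) = 1 / 12 := by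
    field_simp
    ring
  have hSπ : (2 + (p : ℝ) ^ ((3 : ℝ) / 4)) / (1 + (p : ℝ)) *
        ((2 + (q : ℝ) ^ ((3 : ℝ) / 4)) / (1 + (q : ℝ))) +
      3 * ((2 + (p : ℝ) ^ ((1 : ℝ) / 2)) / (1 + (p : ℝ)) *
        ((2 + (q : ℝ) ^ ((1 : ℝ) / 2)) / (1 + (q : ℝ)))) < Real.pi / 40 := by
    calc _ < (3.141592 : ℝ) / 40 := hS
      _ < Real.pi / 40 := by linarith
  calc 10 / (3 * Real.pi) * _ < 10 / (3 * Real.pi) * (Real.pi / 40) :=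
        mul_lt_mul_of_pos_left hSπ (by positivity)
    _ = 1 / 12 := hkey
end

section
/- Let P = {p₁ < p₂ < ... < pₙ} and P' = {q₁ < q₂ < ... < qₘ} be nonempty finite sets of odd primes with n ≤ m and pᵢ ≤ qᵢ for all 1 ≤ i ≤ n. If (10/(3π)) · ( ∏_{p ∈ P} (2 + p^{3/4})/(1 + p) + 3 · ∏_{p ∈ P} (2 + p^{1/2})/(1 + p) ) < 1/12, then also (10/(3π)) · ( ∏_{q ∈ P'} (2 + q^{3/4})/(1 + q) + 3 · ∏_{q ∈ P'} (2 + q^{1/2})/(1 + q) ) < 1/12. -/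
open Finset

/-- Nonnegativity of each factor. -/
lemma aux_factor_nonneg (α : ℝ) (x : ℕ) : 0 ≤ (2 + (x : ℝ) ^ α) / (1 + (x : ℝ)) := by
  apply div_nonneg
  · have := Real.rpow_nonneg (x := (x : ℝ)) (Nat.cast_nonneg x) α
    linarith
  · positivity

/-- The factor is antitone in the base, for bases `≥ 3` and exponents in `(0,1]`. -/
lemma aux_factor_mono (α : ℝ) (hα0 : 0 < α) (hα1 : α ≤ 1) (p q : ℕ)
    (hp3 : 3 ≤ p) (hpq : p ≤ q) :
    (2 + (q : ℝ) ^ α) / (1 + (q : ℝ)) ≤ (2 + (p : ℝ) ^ α) / (1 + (p : ℝ)) := by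
  have hp3' : (3 : ℝ) ≤ (p : ℝ) := by exact_mod_cast hp3
  have hpq' : (p : ℝ) ≤ (q : ℝ) := by exact_mod_cast hpq
  have hp0 : (0 : ℝ) < p := by linarith
  have hq0 : (0 : ℝ) < q := by linarith
  have ha0 : (0 : ℝ) < (p : ℝ) ^ α := Real.rpow_pos_of_pos hp0 α
  have hb0 : (0 : ℝ) < (q : ℝ) ^ α := Real.rpow_pos_of_pos hq0 α
  rw [div_le_div_iff₀ (by linarith) (by linarith)]
  -- fact (ii) : p^α ≤ p
  have hii : (p : ℝ) ^ α ≤ (p : ℝ) := by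
    have := Real.rpow_le_rpow_of_exponent_le (x := (p : ℝ)) (by linarith) hα1
    rwa [Real.rpow_one] at this
  -- fact (iii) : p * q^α ≤ q * p^α
  have hiii : (p : ℝ) * (q : ℝ) ^ α ≤ (q : ℝ) * (p : ℝ) ^ α := by
    have h1 : (p : ℝ) ^ (1 - α) ≤ (q : ℝ) ^ (1 - α) :=
      Real.rpow_le_rpow (le_of_lt hp0) hpq' (by linarith)
    have hp' : (p : ℝ) = (p : ℝ) ^ (1 - α) * (p : ℝ) ^ α := by
      rw [← Real.rpow_add hp0]; ring_nf; rw [Real.rpow_one]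
    have hq' : (q : ℝ) = (q : ℝ) ^ (1 - α) * (q : ℝ) ^ α := by
      rw [← Real.rpow_add hq0]; ring_nf; rw [Real.rpow_one]
    calc (p : ℝ) * (q : ℝ) ^ α = (p : ℝ) ^ (1 - α) * (p : ℝ) ^ α * (q : ℝ) ^ α := by
          rw [← hp']
      _ ≤ (q : ℝ) ^ (1 - α) * (q : ℝ) ^ α * (p : ℝ) ^ α := by
          rw [mul_right_comm ((q:ℝ)^(1-α))]
          apply mul_le_mul_of_nonneg_right _ hb0.le
          exact mul_le_mul_of_nonneg_right h1 ha0.le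
      _ = (q : ℝ) * (p : ℝ) ^ α := by rw [← hq']
  -- fact (i) : q^α ≤ p^α * (1 + α * (q/p - 1))
  have hi : (q : ℝ) ^ α ≤ (p : ℝ) ^ α * (1 + α * ((q : ℝ) / (p : ℝ) - 1)) := by
    have hs : (-1 : ℝ) ≤ (q : ℝ) / (p : ℝ) - 1 := by
      have : (0 : ℝ) ≤ (q : ℝ) / (p : ℝ) := by positivity
      linarith
    have := rpow_one_add_le_one_add_mul_self hs (le_of_lt hα0) hα1
    have heq : (1 : ℝ) + ((q : ℝ) / (p : ℝ) - 1) = (q : ℝ) / (p : ℝ) := by ring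
    rw [heq] at this
    have hdiv : ((q : ℝ) / (p : ℝ)) ^ α = (q : ℝ) ^ α / (p : ℝ) ^ α :=
      Real.div_rpow (le_of_lt hq0) (le_of_lt hp0) α
    rw [hdiv] at this
    calc (q : ℝ) ^ α = (p : ℝ) ^ α * ((q : ℝ) ^ α / (p : ℝ) ^ α) := by
          field_simp
      _ ≤ (p : ℝ) ^ α * (1 + α * ((q : ℝ) / (p : ℝ) - 1)) :=
          mul_le_mul_of_nonneg_left this ha0.le
  -- clear denominators in (i)
  have hi' : (q : ℝ) ^ α * (p : ℝ) ≤
      (p : ℝ) ^ α * (p : ℝ) + α * ((p : ℝ) ^ α * ((q : ℝ) - (p : ℝ))) := by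
    have := mul_le_mul_of_nonneg_right hi hp0.le
    calc (q : ℝ) ^ α * (p : ℝ) ≤ (p : ℝ) ^ α * (1 + α * ((q : ℝ) / (p : ℝ) - 1)) * (p : ℝ) :=
          this
      _ = (p : ℝ) ^ α * (p : ℝ) + α * ((p : ℝ) ^ α * ((q : ℝ) - (p : ℝ))) := by
          field_simp
  nlinarith [mul_le_mul_of_nonneg_right hii (sub_nonneg.mpr hpq'),
    mul_nonneg ha0.le (sub_nonneg.mpr hpq'), mul_le_mul_of_nonneg_left hα1
      (mul_nonneg ha0.le (sub_nonneg.mpr hpq'))]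

/-- For odd primes `q ≥ 5` the factor is at most `1`, for exponents in `(0, 3/4]`. -/
lemma aux_factor_le_one (α : ℝ) (hα0 : 0 < α) (hα : α ≤ 3 / 4) (q : ℕ) (hq : 5 ≤ q) :
    (2 + (q : ℝ) ^ α) / (1 + (q : ℝ)) ≤ 1 := by
  have hq5 : (5 : ℝ) ≤ (q : ℝ) := by exact_mod_cast hq
  have hq0 : (0 : ℝ) < q := by linarith
  rw [div_le_one (by linarith)]
  have h1 : (q : ℝ) ^ α ≤ (q : ℝ) ^ ((3 : ℝ) / 4) :=
    Real.rpow_le_rpow_of_exponent_le (by linarith) hα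
  have h2 : (q : ℝ) ^ ((3 : ℝ) / 4) ≤ (q : ℝ) - 1 := by
    have hnn : (0 : ℝ) ≤ (q : ℝ) ^ ((3 : ℝ) / 4) := Real.rpow_nonneg hq0.le _
    rw [← pow_le_pow_iff_left₀ hnn (by linarith : (0:ℝ) ≤ (q:ℝ) - 1) (by norm_num : (4:ℕ) ≠ 0)]
    have : ((q : ℝ) ^ ((3 : ℝ) / 4)) ^ (4 : ℕ) = (q : ℝ) ^ (3 : ℕ) := by
      rw [← Real.rpow_natCast ((q : ℝ) ^ ((3 : ℝ) / 4)) 4, ← Real.rpow_mul hq0.le,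
        ← Real.rpow_natCast (q : ℝ) 3]
      norm_num
    rw [this]
    nlinarith [sq_nonneg ((q:ℝ) - 5), sq_nonneg (q:ℝ)]
  linarith

/-- Product of a list of reals in `[0,1]` lies in `[0,1]`. -/
lemma aux_list_prod_le_one (l : List ℝ) (h : ∀ x ∈ l, 0 ≤ x ∧ x ≤ 1) :
    0 ≤ l.prod ∧ l.prod ≤ 1 := by
  induction l with
  | nil => simp
  | cons a t ih =>
    have ha := h a List.mem_cons_self
    have iht := ih (fun x hx => h x (List.mem_cons_of_mem a hx))
    rw [List.prod_cons]
    constructor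
    · exact mul_nonneg ha.1 iht.1
    · calc a * t.prod ≤ 1 * 1 := mul_le_mul ha.2 iht.2 iht.1 one_pos.le
        _ = 1 := one_mul 1

/-- Pointwise comparison of list products. -/
lemma aux_list_prod_le (l₁ l₂ : List ℝ) (h : List.Forall₂ (fun a b => 0 ≤ a ∧ a ≤ b) l₁ l₂) :
    0 ≤ l₁.prod ∧ l₁.prod ≤ l₂.prod := by
  induction h with
  | nil => simp
  | @cons a b t₁ t₂ hab ht ih =>
    rw [List.prod_cons, List.prod_cons]
    have hb : 0 ≤ b := le_trans hab.1 hab.2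
    refine ⟨mul_nonneg hab.1 ih.1, ?_⟩
    calc a * t₁.prod ≤ b * t₁.prod := mul_le_mul_of_nonneg_right hab.2 ih.1
      _ ≤ b * t₂.prod := mul_le_mul_of_nonneg_left ih.2 hb

/-- Key product monotonicity. -/
lemma aux_prod_mono (α : ℝ) (hα0 : 0 < α) (hα : α ≤ 3 / 4) (P P' : Finset ℕ)
    (hP : ∀ p ∈ P, p.Prime ∧ Odd p) (hP' : ∀ q ∈ P', q.Prime ∧ Odd q)
    (hPne : P.Nonempty)
    (hcard : P.card ≤ P'.card)
    (hle : ∀ i : ℕ, ∀ (hi : i < (P.sort (· ≤ ·)).length)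
        (hi' : i < (P'.sort (· ≤ ·)).length),
        (P.sort (· ≤ ·))[i]'hi ≤ (P'.sort (· ≤ ·))[i]'hi') :
    (∏ q ∈ P', (2 + (q : ℝ) ^ α) / (1 + (q : ℝ))) ≤
      ∏ p ∈ P, (2 + (p : ℝ) ^ α) / (1 + (p : ℝ)) := by
  have hα1 : α ≤ 1 := by linarith
  set f : ℕ → ℝ := fun x => (2 + (x : ℝ) ^ α) / (1 + (x : ℝ)) with hf
  set L : List ℕ := P.sort (· ≤ ·) with hL
  set L' : List ℕ := P'.sort (· ≤ ·) with hL'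
  have hLlen : L.length = P.card := Finset.length_sort _
  have hL'len : L'.length = P'.card := Finset.length_sort _
  set n := L.length with hn
  have hnm : n ≤ L'.length := by rw [hL'len, hLlen]; exact hcard
  have hn1 : 1 ≤ n := by
    rw [hLlen]
    exact Finset.card_pos.mpr hPne
  -- odd primes are ≥ 3
  have h3 : ∀ x : ℕ, x.Prime → Odd x → 3 ≤ x := by
    intro x hx hox
    have := hx.two_le
    have : x % 2 = 1 := Nat.odd_iff.mp hox
    omega
  have hmemP : ∀ x ∈ L, 3 ≤ x := by
    intro x hx
    rw [hL, Finset.mem_sort] at hx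
    exact h3 x (hP x hx).1 (hP x hx).2
  have hmemP' : ∀ x ∈ L', 3 ≤ x := by
    intro x hx
    rw [hL', Finset.mem_sort] at hx
    exact h3 x (hP' x hx).1 (hP' x hx).2
  -- products as list products
  have hprodP : (∏ p ∈ P, f p) = (L.map f).prod := by
    rw [Finset.prod_eq_multiset_prod, ← Finset.sort_eq P (· ≤ ·), Multiset.map_coe,
      Multiset.prod_coe]
  have hprodP' : (∏ q ∈ P', f q) = (L'.map f).prod := by
    rw [Finset.prod_eq_multiset_prod, ← Finset.sort_eq P' (· ≤ ·), Multiset.map_coe,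
      Multiset.prod_coe]
  -- split L'
  have hsplit : (L'.map f).prod
      = ((L'.take n).map f).prod * ((L'.drop n).map f).prod := by
    rw [← List.prod_append, ← List.map_append, List.take_append_drop]
  -- take part ≤ prod over P
  have htake : ((L'.take n).map f).prod ≤ (L.map f).prod := by
    refine (aux_list_prod_le _ _ ?_).2
    rw [List.forall₂_iff_get]
    constructor
    · simp [List.length_take, Nat.min_eq_left hnm]; exact hn
    · intro i h₁ h₂
      simp only [List.length_map, List.length_take] at h₁ h₂
      have hiL : i < L.length := h₂
      have hiL' : i < L'.length := lt_of_lt_of_le (lt_of_lt_of_le h₁ (min_le_left _ _)) hnm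
      have hget : ((L'.take n).map f).get ⟨i, by simpa using h₁⟩ = f (L'[i]'hiL') := by
        simp [List.getElem_take]
      have hget2 : (L.map f).get ⟨i, by simpa using h₂⟩ = f (L[i]'hiL) := by
        simp
      rw [hget, hget2]
      refine ⟨aux_factor_nonneg α _, ?_⟩
      apply aux_factor_mono α hα0 hα1
      · exact hmemP _ (List.getElem_mem hiL)
      · exact hle i hiL hiL'
  -- drop part ≤ 1
  have hdrop := aux_list_prod_le_one ((L'.drop n).map f) (by
    intro x hx
    rw [List.mem_map] at hx
    obtain ⟨y, hy, rfl⟩ := hx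
    refine ⟨aux_factor_nonneg α y, ?_⟩
    apply aux_factor_le_one α hα0 hα
    -- y is at index ≥ n ≥ 1 in the strictly sorted list L'
    rw [List.mem_iff_getElem] at hy
    obtain ⟨k, hk, hyk⟩ := hy
    have hklt : n + k < L'.length := by
      have := hk
      rw [List.length_drop] at this
      omega
    have hyk' : y = L'[n + k]'hklt := by
      rw [← hyk, List.getElem_drop]
    have h0lt : 0 < L'.length := by omega
    have hsorted := Finset.sortedLT_sort P'
    have hlt : L'.get ⟨0, h0lt⟩ < L'.get ⟨n + k, hklt⟩ := by
      apply hsorted.strictMono_get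
      simp only [Fin.mk_lt_mk]
      omega
    have h30 : 3 ≤ L'.get ⟨0, h0lt⟩ := hmemP' _ (L'.get_mem _)
    have hy3 : 3 ≤ y := hmemP' y (hyk ▸ List.mem_of_mem_drop (by
      rw [List.mem_iff_getElem]; exact ⟨k, hk, rfl⟩))
    have hy4 : 4 ≤ y := by
      rw [hyk']
      simp only [List.get_eq_getElem] at hlt h30
      omega
    -- y is odd, so y ≥ 5
    have hyodd : Odd y := by
      have hymem : y ∈ P' := by
        rw [← Finset.mem_sort (· ≤ ·)]
        exact hyk ▸ List.mem_of_mem_drop (by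
          rw [List.mem_iff_getElem]; exact ⟨k, hk, rfl⟩)
      exact (hP' y hymem).2
    have : y % 2 = 1 := Nat.odd_iff.mp hyodd
    omega)
  have htake0 : 0 ≤ ((L'.take n).map f).prod := by
    apply List.prod_nonneg
    intro x hx
    rw [List.mem_map] at hx
    obtain ⟨y, _, rfl⟩ := hx
    exact aux_factor_nonneg α y
  have hLprod0 : 0 ≤ (L.map f).prod := by
    apply List.prod_nonneg
    intro x hx
    rw [List.mem_map] at hx
    obtain ⟨y, _, rfl⟩ := hx
    exact aux_factor_nonneg α y
  rw [hprodP, hprodP', hsplit]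
  calc ((L'.take n).map f).prod * ((L'.drop n).map f).prod
      ≤ ((L'.take n).map f).prod * 1 :=
        mul_le_mul_of_nonneg_left hdrop.2 htake0
    _ = ((L'.take n).map f).prod := mul_one _
    _ ≤ (L.map f).prod := htake

/-- If `P ⪯ P'` are nonempty finite sets of odd primes (i.e. `|P| ≤ |P'|` and the `i`-th
smallest element of `P` is at most the `i`-th smallest element of `P'` for each `i ≤ |P|`),
then the key inequality for `P` implies the key inequality for `P'`. -/
theorem key_inequality_mono (P P' : Finset ℕ)
    (hP : ∀ p ∈ P, p.Prime ∧ Odd p) (hP' : ∀ q ∈ P', q.Prime ∧ Odd q)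
    (hPne : P.Nonempty) (hP'ne : P'.Nonempty)
    (hcard : P.card ≤ P'.card)
    (hle : ∀ i : ℕ, ∀ (hi : i < (P.sort (· ≤ ·)).length)
        (hi' : i < (P'.sort (· ≤ ·)).length),
        (P.sort (· ≤ ·))[i]'hi ≤ (P'.sort (· ≤ ·))[i]'hi')
    (h : 10 / (3 * Real.pi) *
        ((∏ p ∈ P, (2 + (p : ℝ) ^ ((3 : ℝ) / 4)) / (1 + (p : ℝ))) +
          3 * ∏ p ∈ P, (2 + (p : ℝ) ^ ((1 : ℝ) / 2)) / (1 + (p : ℝ))) < 1 / 12) :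
    10 / (3 * Real.pi) *
        ((∏ q ∈ P', (2 + (q : ℝ) ^ ((3 : ℝ) / 4)) / (1 + (q : ℝ))) +
          3 * ∏ q ∈ P', (2 + (q : ℝ) ^ ((1 : ℝ) / 2)) / (1 + (q : ℝ))) < 1 / 12 := by
  have h1 := aux_prod_mono ((3:ℝ)/4) (by norm_num) (by norm_num) P P' hP hP' hPne hcard hle
  have h2 := aux_prod_mono ((1:ℝ)/2) (by norm_num) (by norm_num) P P' hP hP' hPne hcard hle
  have hpi : (0 : ℝ) < 10 / (3 * Real.pi) := by positivity
  calc 10 / (3 * Real.pi) *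
        ((∏ q ∈ P', (2 + (q : ℝ) ^ ((3 : ℝ) / 4)) / (1 + (q : ℝ))) +
          3 * ∏ q ∈ P', (2 + (q : ℝ) ^ ((1 : ℝ) / 2)) / (1 + (q : ℝ)))
      ≤ 10 / (3 * Real.pi) *
        ((∏ p ∈ P, (2 + (p : ℝ) ^ ((3 : ℝ) / 4)) / (1 + (p : ℝ))) +
          3 * ∏ p ∈ P, (2 + (p : ℝ) ^ ((1 : ℝ) / 2)) / (1 + (p : ℝ))) := by
        apply mul_le_mul_of_nonneg_left _ hpi.le
        linarith
    _ < 1 / 12 := h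
end
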